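/- Let F = {T₁, …, Tₙ} be a finite set of reduction operators relative to a finite well-ordered set (G,<). Order the basis {e_{i,g} : 1 ≤ i ≤ n, g T_i-reducible} of ker(T₁) × ⋯ × ker(Tₙ) lexicographically by (i,g). Then the set of leading terms of nonzero elements of syz(F) with respect to this order is exactly {e_{i,g} : 2 ≤ i ≤ n, g ∈ Red((T₁ ∧ ⋯ ∧ T_{i−1}) ∨ Tᵢ)}. -/

import Mathlib

open Finsupp

variable {K G : Type*} [Field K] [LinearOrder G] [Fintype G]

/-- `T` is a reduction operator relative to `(G, <)`. -/
def IsRedOp (T : (G →₀ K) →ₗ[K] (G →₀ K)) : Prop :=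
  T ∘ₗ T = T ∧
    ∀ g : G, T (single g 1) = single g 1 ∨ (T (single g 1)).support.max < (g : WithBot G)

/-- The space of syzygies for the family `T₁, …, T_k`, as a submodule of the product. -/
noncomputable def SyzMod {k : ℕ} (T : Fin k → (G →₀ K) →ₗ[K] (G →₀ K)) :
    Submodule K (Fin k → (G →₀ K)) :=
  (⨅ j, (LinearMap.ker (T j)).comap (LinearMap.proj j)) ⊓
    LinearMap.ker (∑ j, (LinearMap.proj j : (Fin k → (G →₀ K)) →ₗ[K] (G →₀ K)))

set_option linter.unusedSectionVars false

-- decomposition of any v as sum of singles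
lemma aux_decomp (v : G →₀ K) : v = ∑ g : G, (v g) • single g (1:K) := by
  ext b
  simp [Finsupp.finset_sum_apply, Finsupp.single_apply, Finset.sum_ite_eq']

-- apply T
lemma aux_T_apply (T : (G →₀ K) →ₗ[K] (G →₀ K)) (v : G →₀ K) (b : G) :
    T v b = ∑ g : G, v g * (T (single g 1)) b := by
  conv_lhs => rw [aux_decomp v]
  rw [map_sum]
  simp only [map_smul, Finsupp.finset_sum_apply, Finsupp.smul_apply, smul_eq_mul]

-- if max of support < g then coefficient at b ≥ g is 0
lemma aux_coeff_zero {w : G →₀ K} {g b : G} (h : w.support.max < (g : WithBot G))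
    (hb : g ≤ b) : w b = 0 := by
  by_contra hne
  have hmem : b ∈ w.support := Finsupp.mem_support_iff.mpr hne
  have := Finset.le_max hmem
  have : (b : WithBot G) < g := lt_of_le_of_lt this h
  exact absurd ((WithBot.coe_le_coe).mpr hb) (not_le.mpr this)

-- L2 : max support element of a nonzero kernel element is reducible
lemma aux_max_red (T : (G →₀ K) →ₗ[K] (G →₀ K)) (hT : IsRedOp T)
    {v : G →₀ K} (hv : T v = 0) {B : G} (hB : v B ≠ 0)
    (hmax : ∀ g : G, v g ≠ 0 → g ≤ B) : T (single B 1) ≠ single B 1 := by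
  intro h
  have h0 : (0:K) = ∑ g : G, v g * (T (single g 1)) B := by
    rw [← aux_T_apply, hv]; rfl
  rw [Finset.sum_eq_single B] at h0
  · rw [h] at h0
    simp at h0
    exact hB h0.symm
  · intro g _ hgB
    rcases eq_or_ne (v g) 0 with h1 | h1
    · simp [h1]
    · have hle : g ≤ B := hmax g h1
      rcases (hT.2 g) with h2 | h2
      · rw [h2, Finsupp.single_apply, if_neg hgB, mul_zero]
      · rw [aux_coeff_zero h2 hle, mul_zero]
  · intro h; exact absurd (Finset.mem_univ B) h

-- kernel element with all reducible coefficients zero is zero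
lemma aux_ker_zero (T : (G →₀ K) →ₗ[K] (G →₀ K)) (hT : IsRedOp T)
    {v : G →₀ K} (hv : T v = 0)
    (h : ∀ g : G, T (single g 1) ≠ single g 1 → v g = 0) : v = 0 := by
  by_contra hne
  have hsup : v.support.Nonempty := Finsupp.support_nonempty_iff.mpr hne
  set B := v.support.max' hsup with hBdef
  have hBmem : B ∈ v.support := v.support.max'_mem hsup
  have hBne : v B ≠ 0 := Finsupp.mem_support_iff.mp hBmem
  have hred := aux_max_red T hT hv hBne
    (fun g hg => Finset.le_max' _ g (Finsupp.mem_support_iff.mpr hg))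
  exact hBne (h B hred)

lemma aux_lead (T : (G →₀ K) →ₗ[K] (G →₀ K)) (hT : IsRedOp T) {g : G}
    (hg : T (single g 1) ≠ single g 1) :
    T (single g 1 - T (single g 1)) = 0 ∧ ((single g 1 - T (single g 1) : G →₀ K)) g = 1 ∧
      ∀ b : G, ((single g 1 - T (single g 1) : G →₀ K)) b ≠ 0 → b ≤ g := by
  have hmax := (hT.2 g).resolve_left hg
  refine ⟨?_, ?_, ?_⟩
  · rw [map_sub]
    have h2 : T (T (single g 1)) = T (single g 1) := by
      conv_lhs => rw [← LinearMap.comp_apply, hT.1]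
    rw [h2, sub_self]
  · rw [Finsupp.sub_apply, Finsupp.single_apply, if_pos rfl,
      aux_coeff_zero hmax le_rfl, sub_zero]
  · intro b hb
    by_contra hlt
    push_neg at hlt
    rw [Finsupp.sub_apply, Finsupp.single_apply, if_neg (ne_of_lt hlt),
      aux_coeff_zero hmax hlt.le, sub_zero] at hb
    exact hb rfl

lemma mem_syz {n : ℕ} (T : Fin n → (G →₀ K) →ₗ[K] (G →₀ K)) (v : Fin n → G →₀ K) :
    v ∈ SyzMod T ↔ (∀ j, T j (v j) = 0) ∧ ∑ j, v j = 0 := by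
  simp [SyzMod, Submodule.mem_inf, Submodule.mem_iInf, LinearMap.mem_ker,
    LinearMap.sum_apply, LinearMap.proj_apply]



/-- Leading terms of syzygies: with respect to the basis `e_{i,g}` of
`ker T₁ × ⋯ × ker Tₙ` ordered lexicographically (the coefficient of `e_{i,g}` in a
syzygy `v` being `(v i) g` for `g` `Tᵢ`-reducible), the leading terms of nonzero
syzygies are exactly the pairs `(i, g)` with `2 ≤ i` and `g` reducible for
`U_{i-1} ∨ Tᵢ`, where `Vᵢ = U_{i-1} ∨ Tᵢ` is the reduction operator with kernel
`(ker T₁ + ⋯ + ker T_{i-1}) ∩ ker Tᵢ`. -/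
theorem leading_terms_of_syzygies (n : ℕ)
    (T : Fin n → (G →₀ K) →ₗ[K] (G →₀ K)) (hT : ∀ i, IsRedOp (T i))
    (V : Fin n → (G →₀ K) →ₗ[K] (G →₀ K)) (hV : ∀ i, IsRedOp (V i))
    (hVker : ∀ i, LinearMap.ker (V i) =
      (⨆ j : Fin n, ⨆ _ : j < i, LinearMap.ker (T j)) ⊓ LinearMap.ker (T i)) :
    {p : Fin n × G | ∃ v ∈ SyzMod T, v ≠ 0 ∧
        T p.1 (single p.2 1) ≠ single p.2 1 ∧ v p.1 p.2 ≠ 0 ∧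
        ∀ q : Fin n × G, T q.1 (single q.2 1) ≠ single q.2 1 → v q.1 q.2 ≠ 0 →
          toLex q ≤ toLex p} =
      {p : Fin n × G | 1 ≤ (p.1 : ℕ) ∧ V p.1 (single p.2 1) ≠ single p.2 1} := by
  ext ⟨i, g⟩
  simp only [Set.mem_setOf_eq]
  constructor
  · rintro ⟨v, hvS, hvne, hired, hvig, hlead⟩
    obtain ⟨hker, hsum⟩ := (mem_syz T v).mp hvS
    -- components above i vanish
    have hzero : ∀ j, i < j → v j = 0 := by
      intro j hj
      refine aux_ker_zero (T j) (hT j) (hker j) ?_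
      intro h hredh
      by_contra hne'
      have := hlead (j, h) hredh hne'
      rcases Prod.Lex.le_iff.mp this with h1 | h1
      · exact absurd h1 (not_lt.mpr hj.le)
      · exact absurd h1.1 (ne_of_gt hj)
    -- 1 ≤ i
    have hi : 1 ≤ (i : ℕ) := by
      by_contra h
      push_neg at h
      interval_cases h' : (i : ℕ)
      have hji : ∀ j, j ≠ i → v j = 0 := by
        intro j hj
        refine hzero j (Fin.lt_def.mpr ?_)
        have := Fin.val_ne_of_ne hj
        omega
      have : ∑ j, v j = v i := Finset.sum_eq_single_of_mem i (Finset.mem_univ i)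
        (fun j _ hj => hji j hj)
      rw [hsum] at this
      exact hvig (by rw [← this]; rfl)
    refine ⟨hi, ?_⟩
    -- the maximum of the support of v i is at most g
    have hmax : ∀ b : G, v i b ≠ 0 → b ≤ g := by
      have hsupn : (v i).support.Nonempty :=
        ⟨g, Finsupp.mem_support_iff.mpr hvig⟩
      set B := (v i).support.max' hsupn with hBdef
      have hBmem : B ∈ (v i).support := (v i).support.max'_mem hsupn
      have hBne : v i B ≠ 0 := Finsupp.mem_support_iff.mp hBmem
      have hBmax : ∀ b : G, v i b ≠ 0 → b ≤ B :=
        fun b hb => Finset.le_max' _ b (Finsupp.mem_support_iff.mpr hb)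
      have hBred := aux_max_red (T i) (hT i) (hker i) hBne hBmax
      have hBg : B ≤ g := by
        rcases Prod.Lex.le_iff.mp (hlead (i, B) hBred hBne) with h1 | h1
        · exact absurd h1 (lt_irrefl i)
        · exact h1.2
      intro b hb
      exact le_trans (hBmax b hb) hBg
    -- v i lies in the kernel of V i
    have hmem : v i ∈ LinearMap.ker (V i) := by
      rw [hVker i, Submodule.mem_inf]
      refine ⟨?_, LinearMap.mem_ker.mpr (hker i)⟩
      have hvi : v i = ∑ j ∈ Finset.univ.erase i, -(v j) := by
        have h1 : v i + ∑ j ∈ Finset.univ.erase i, v j = 0 := by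
          rw [Finset.add_sum_erase _ _ (Finset.mem_univ i)]; exact hsum
        rw [Finset.sum_neg_distrib]
        exact eq_neg_of_add_eq_zero_left h1
      rw [hvi]
      refine Submodule.sum_mem _ ?_
      intro j hj
      have hji : j ≠ i := Finset.ne_of_mem_erase hj
      rcases lt_or_ge j i with h1 | h1
      · exact Submodule.neg_mem _ (Submodule.mem_iSup_of_mem j
          (Submodule.mem_iSup_of_mem h1 (LinearMap.mem_ker.mpr (hker j))))
      · have : i < j := lt_of_le_of_ne h1 (Ne.symm hji)
        rw [hzero j this, neg_zero]
        exact Submodule.zero_mem _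
    exact aux_max_red (V i) (hV i) (LinearMap.mem_ker.mp hmem) hvig hmax
  · rintro ⟨hi, hred⟩
    obtain ⟨hw0, hwg, hwle⟩ := aux_lead (V i) (hV i) hred
    set w : G →₀ K := single g 1 - V i (single g 1) with hwdef
    have hwmem : w ∈ LinearMap.ker (V i) := LinearMap.mem_ker.mpr hw0
    rw [hVker i] at hwmem
    obtain ⟨hw1, hw2⟩ := Submodule.mem_inf.mp hwmem
    obtain ⟨f, hf, hfsum⟩ := (Submodule.mem_iSup_iff_exists_finsupp _ _).mp hw1
    have hfj : ∀ j : Fin n, ¬ j < i → f j = 0 := by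
      intro j hj
      have := hf j
      rw [iSup_neg hj] at this
      exact this
    have hfj' : ∀ j : Fin n, j < i → f j ∈ LinearMap.ker (T j) := by
      intro j hj
      have := hf j
      rwa [iSup_pos hj] at this
    have hsumf : ∑ j, f j = w := by
      rw [← hfsum, Finsupp.sum_fintype]
      intro _; rfl
    set u : Fin n → (G →₀ K) := fun j => (if j = i then w else 0) - f j with hudef
    have hui : u i = w := by
      simp [hudef, hfj i (lt_irrefl i)]
    have huj : ∀ j, j ≠ i → u j = -(f j) := by
      intro j hj
      simp only [hudef, if_neg hj, zero_sub]
    have hired : T i (single g 1) ≠ single g 1 := by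
      refine aux_max_red (T i) (hT i) (LinearMap.mem_ker.mp hw2) ?_ hwle
      rw [hwg]; exact one_ne_zero
    refine ⟨u, ?_, ?_, hired, ?_, ?_⟩
    · rw [mem_syz]
      constructor
      · intro j
        rcases eq_or_ne j i with rfl | hj
        · rw [hui]; exact LinearMap.mem_ker.mp hw2
        · rw [huj j hj, map_neg]
          rcases lt_or_ge j i with h1 | h1
          · rw [LinearMap.mem_ker.mp (hfj' j h1), neg_zero]
          · rw [hfj j (not_lt.mpr h1), map_zero, neg_zero]
      · have : ∑ j, u j = (∑ j, (if j = i then w else 0)) - ∑ j, f j := by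
          rw [← Finset.sum_sub_distrib]
        rw [this, Finset.sum_ite_eq' Finset.univ i (fun _ => w),
          if_pos (Finset.mem_univ i), hsumf, sub_self]
    · intro h0
      have : u i = 0 := congrFun h0 i
      rw [hui] at this
      rw [this] at hwg
      simp at hwg
    · rw [hui, hwg]; exact one_ne_zero
    · rintro ⟨j, h⟩ hjred hne
      rcases eq_or_ne j i with rfl | hj
      · rw [hui] at hne
        exact Prod.Lex.le_iff.mpr (Or.inr ⟨rfl, hwle h hne⟩)
      · rw [huj j hj, Finsupp.neg_apply, neg_ne_zero] at hne
        have hlt : j < i := by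
          by_contra h1
          rw [hfj j h1] at hne
          exact hne rfl
        exact Prod.Lex.le_iff.mpr (Or.inl hlt)
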